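/- Let (G,ω) be a connected edge-weighted simple graph and T* a maximum weight spanning tree. Then 2·ω(G) − ω(T*) ≤ C_1(G,ω); in particular, for an unweighted graph with n vertices and m edges, 2m − n + 1 ≤ C_1(G). -/

import Mathlib

open Classical

noncomputable section CongestionDefs

variable {V : Type*} [Fintype V] [DecidableEq V]

/-- Weighted congestion of an edge `e` of a spanning tree `T` of `G`: total weight of
edges of `G` whose endpoints are separated in `T` with `e` removed. -/
def edgeCongestion (G T : SimpleGraph V) (ω : Sym2 V → ℝ) (e : Sym2 V) : ℝ :=
  ∑ f : Sym2 V,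
    if f ∈ G.edgeSet ∧ ∃ a b : V, f = s(a, b) ∧ ¬ (T.deleteEdges {e}).Reachable a b
    then ω f else 0

/-- The `L^p` congestion of a spanning tree `T` (for a natural `p ≥ 1`). -/
def treeCong (G T : SimpleGraph V) (ω : Sym2 V → ℝ) (p : ℕ) : ℝ :=
  (∑ e : Sym2 V, if e ∈ T.edgeSet then (edgeCongestion G T ω e) ^ p else 0) ^ ((1 : ℝ) / p)

/-- The `L^∞` congestion of a spanning tree `T`. -/
def treeCongTop (G T : SimpleGraph V) (ω : Sym2 V → ℝ) : ℝ :=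
  ⨆ e ∈ T.edgeSet, edgeCongestion G T ω e

/-- `T` is a spanning tree of `G`. -/
def IsSpanningTree (G T : SimpleGraph V) : Prop := T ≤ G ∧ T.IsTree

/-- The `L^p` spanning tree congestion of `(G, ω)`. -/
def graphCong (G : SimpleGraph V) (ω : Sym2 V → ℝ) (p : ℕ) : ℝ :=
  sInf {x | ∃ T : SimpleGraph V, IsSpanningTree G T ∧ treeCong G T ω p = x}

/-- The `L^∞` spanning tree congestion of `(G, ω)`. -/
def graphCongTop (G : SimpleGraph V) (ω : Sym2 V → ℝ) : ℝ :=
  sInf {x | ∃ T : SimpleGraph V, IsSpanningTree G T ∧ treeCongTop G T ω = x}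

/-- Total weight of (the edges of) a graph. -/
def totalWeight (T : SimpleGraph V) (ρ : Sym2 V → ℝ) : ℝ :=
  ∑ e : Sym2 V, if e ∈ T.edgeSet then ρ e else 0

end CongestionDefs

section Aux

variable {V : Type*} [Fintype V] [DecidableEq V]

lemma sep_of_mem_path_edges' {T : SimpleGraph V} (hT : T.IsAcyclic) {a b : V}
    (p : T.Walk a b) (hp : p.IsPath) {e : Sym2 V} (he : e ∈ p.edges) :
    ¬ (T.deleteEdges {e}).Reachable a b := by
  rintro ⟨q⟩
  have hle : T.deleteEdges {e} ≤ T := by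
    simp [SimpleGraph.deleteEdges]
  set q' := q.bypass with hq'
  have hq'path : q'.IsPath := q.bypass_isPath
  have hq''path : (q'.mapLe hle).IsPath := hq'path.mapLe hle
  have huniq := SimpleGraph.isAcyclic_iff_path_unique.mp hT ⟨p, hp⟩ ⟨q'.mapLe hle, hq''path⟩
  have hpe : p = q'.mapLe hle := congrArg Subtype.val huniq
  rw [hpe] at he
  have h1 : e ∈ q'.edges := by
    simpa [SimpleGraph.Walk.mapLe, SimpleGraph.Walk.edges_map, Sym2.map_id'] using he
  have h2 := q'.edges_subset_edgeSet h1
  rw [SimpleGraph.edgeSet_deleteEdges] at h2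
  exact h2.2 rfl

lemma per_edge_bound' (G T : SimpleGraph V) (ω : Sym2 V → ℝ)
    (hω : ∀ e ∈ G.edgeSet, 0 < ω e) (hT : T ≤ G) (hTt : T.IsTree) (f : Sym2 V) :
    2 * (if f ∈ G.edgeSet then ω f else 0) - (if f ∈ T.edgeSet then ω f else 0)
      ≤ ∑ e : Sym2 V, if e ∈ T.edgeSet ∧ f ∈ G.edgeSet ∧
          (∃ a b : V, f = s(a, b) ∧ ¬ (T.deleteEdges {e}).Reachable a b)
        then ω f else 0 := by
  induction f using Sym2.ind with
  | _ u v =>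
  set F : Sym2 V → ℝ := fun e => if e ∈ T.edgeSet ∧ s(u, v) ∈ G.edgeSet ∧
          (∃ a b : V, s(u, v) = s(a, b) ∧ ¬ (T.deleteEdges {e}).Reachable a b)
        then ω s(u, v) else 0 with hF
  have hnn : ∀ e ∈ Finset.univ (α := Sym2 V), 0 ≤ F e := by
    intro e _
    simp only [hF]
    split
    · next h => exact (hω _ h.2.1).le
    · exact le_rfl
  by_cases hfG : s(u, v) ∈ G.edgeSet
  · have hGadj : G.Adj u v := hfG
    have hab : u ≠ v := hGadj.ne
    by_cases hfT : s(u, v) ∈ T.edgeSet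
    · have hTadj : T.Adj u v := hfT
      have hpath : (SimpleGraph.Walk.cons hTadj SimpleGraph.Walk.nil).IsPath := by
        simp [SimpleGraph.Walk.isPath_def, hab]
      have hsep := sep_of_mem_path_edges' hTt.IsAcyclic _ hpath
        (e := s(u, v)) (by simp)
      have hone : F s(u, v) ≤ ∑ e : Sym2 V, F e :=
        Finset.single_le_sum hnn (Finset.mem_univ _)
      have hFval : F s(u, v) = ω s(u, v) := by
        simp only [hF]
        exact if_pos ⟨hfT, hfG, u, v, rfl, hsep⟩
      simp only [if_pos hfG, if_pos hfT]
      rw [hFval] at hone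
      calc 2 * ω s(u, v) - ω s(u, v) = ω s(u, v) := by ring
        _ ≤ _ := hone
    · have hreach : T.Reachable u v := hTt.isConnected.preconnected u v
      obtain ⟨p₀⟩ := hreach
      have hppath : p₀.bypass.IsPath := p₀.bypass_isPath
      have hTadj : ¬ T.Adj u v := fun h => hfT ((SimpleGraph.mem_edgeSet T).mpr h)
      obtain ⟨e₁, e₂, hne, he₁, he₂⟩ :
          ∃ e₁ e₂ : Sym2 V, e₁ ≠ e₂ ∧ e₁ ∈ p₀.bypass.edges ∧ e₂ ∈ p₀.bypass.edges := by
        cases hq : p₀.bypass with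
        | nil => exact absurd rfl hab
        | @cons _ c _ h q =>
          cases hr : q with
          | nil =>
            exfalso
            subst hr
            exact hTadj h
          | @cons _ d _ h' r =>
            refine ⟨s(u, c), s(c, d), ?_, ?_, ?_⟩
            · intro heq
              have had : u = d ∨ u = c := by
                rw [Sym2.eq_iff] at heq
                rcases heq with ⟨h1, h2⟩ | ⟨h1, h2⟩
                · exact Or.inr h1
                · exact Or.inl h1
              have hsupp := hppath.support_nodup
              rw [hq, hr] at hsupp
              simp only [SimpleGraph.Walk.support_cons, List.nodup_cons] at hsupp
              rcases had with rfl | rfl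
              · exact hsupp.1 (by simp [SimpleGraph.Walk.start_mem_support])
              · exact hsupp.1 (by simp)
            · simp
            · simp
      have hin : ∀ e ∈ p₀.bypass.edges, F e = ω s(u, v) := by
        intro e he
        have hsep := sep_of_mem_path_edges' hTt.IsAcyclic _ hppath he
        have heT : e ∈ T.edgeSet := p₀.bypass.edges_subset_edgeSet he
        simp only [hF]
        exact if_pos ⟨heT, hfG, u, v, rfl, hsep⟩
      have hsum : F e₁ + F e₂ ≤ ∑ e : Sym2 V, F e := by
        calc F e₁ + F e₂ = ∑ e ∈ ({e₁, e₂} : Finset (Sym2 V)), F e := by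
              rw [Finset.sum_pair hne]
          _ ≤ ∑ e : Sym2 V, F e :=
              Finset.sum_le_sum_of_subset_of_nonneg (Finset.subset_univ _)
                (fun i hi _ => hnn i hi)
      rw [hin e₁ he₁, hin e₂ he₂] at hsum
      simp only [if_pos hfG, if_neg hfT]
      linarith
  · have hfT : s(u, v) ∉ T.edgeSet := fun h => hfG (SimpleGraph.edgeSet_mono hT h)
    have hz : ∀ e ∈ Finset.univ (α := Sym2 V), F e = 0 := by
      intro e _; simp [hF, hfG]
    rw [Finset.sum_congr rfl hz]
    simp [hfG, hfT]

lemma tree_bound' (G T : SimpleGraph V) (ω : Sym2 V → ℝ)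
    (hω : ∀ e ∈ G.edgeSet, 0 < ω e) (hT : IsSpanningTree G T) :
    2 * totalWeight G ω - totalWeight T ω ≤ treeCong G T ω 1 := by
  have hS : treeCong G T ω 1
      = ∑ e : Sym2 V, if e ∈ T.edgeSet then edgeCongestion G T ω e else 0 := by
    simp [treeCong, Real.rpow_one]
  rw [hS]
  have hterm : ∀ e : Sym2 V,
      (if e ∈ T.edgeSet then edgeCongestion G T ω e else 0)
        = ∑ f : Sym2 V, if e ∈ T.edgeSet ∧ f ∈ G.edgeSet ∧
            (∃ a b : V, f = s(a, b) ∧ ¬ (T.deleteEdges {e}).Reachable a b)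
          then ω f else 0 := by
    intro e
    by_cases h : e ∈ T.edgeSet
    · simp [edgeCongestion, h]
    · simp [h]
  calc 2 * totalWeight G ω - totalWeight T ω
      = ∑ f : Sym2 V, (2 * (if f ∈ G.edgeSet then ω f else 0)
          - (if f ∈ T.edgeSet then ω f else 0)) := by
        simp [totalWeight, Finset.sum_sub_distrib, Finset.mul_sum]
    _ ≤ ∑ f : Sym2 V, ∑ e : Sym2 V, (if e ∈ T.edgeSet ∧ f ∈ G.edgeSet ∧
            (∃ a b : V, f = s(a, b) ∧ ¬ (T.deleteEdges {e}).Reachable a b)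
          then ω f else 0) :=
        Finset.sum_le_sum (fun f _ => per_edge_bound' G T ω hω hT.1 hT.2 f)
    _ = ∑ e : Sym2 V, ∑ f : Sym2 V, (if e ∈ T.edgeSet ∧ f ∈ G.edgeSet ∧
            (∃ a b : V, f = s(a, b) ∧ ¬ (T.deleteEdges {e}).Reachable a b)
          then ω f else 0) := Finset.sum_comm
    _ = _ := by
        exact Finset.sum_congr rfl (fun e _ => (hterm e).symm)

end Aux

/-- If `T*` is a maximum weight spanning tree of `(G,ω)` then `2·ω(G) − ω(T*) ≤ C_1(G,ω)`;
in particular, for an unweighted graph with `n` vertices and `m` edges,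
`2m − n + 1 ≤ C_1(G)`. -/
theorem two_weight_sub_le_graphCong_one {V : Type*} [Fintype V] [DecidableEq V]
    (G : SimpleGraph V) (hG : G.Connected) (ω : Sym2 V → ℝ)
    (hω : ∀ e ∈ G.edgeSet, 0 < ω e)
    (Tstar : SimpleGraph V) (hTs : IsSpanningTree G Tstar)
    (hmax : ∀ T : SimpleGraph V, IsSpanningTree G T →
      totalWeight T ω ≤ totalWeight Tstar ω) :
    2 * totalWeight G ω - totalWeight Tstar ω ≤ graphCong G ω 1 ∧
      2 * (G.edgeSet.ncard : ℝ) - (Fintype.card V : ℝ) + 1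
        ≤ graphCong G (fun _ => (1 : ℝ)) 1 := by
  have key : ∀ (ρ : Sym2 V → ℝ), (∀ e ∈ G.edgeSet, 0 < ρ e) →
      (∀ T : SimpleGraph V, IsSpanningTree G T → totalWeight T ρ ≤ totalWeight Tstar ρ) →
      2 * totalWeight G ρ - totalWeight Tstar ρ ≤ graphCong G ρ 1 := by
    intro ρ hρ hm
    refine le_csInf ⟨treeCong G Tstar ρ 1, Tstar, hTs, rfl⟩ ?_
    rintro x ⟨T, hT, rfl⟩
    calc 2 * totalWeight G ρ - totalWeight Tstar ρ
        ≤ 2 * totalWeight G ρ - totalWeight T ρ := by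
          have := hm T hT; linarith
      _ ≤ treeCong G T ρ 1 := tree_bound' G T ρ hρ hT
  constructor
  · exact key ω hω hmax
  · -- constant weight 1
    have tw1 : ∀ T : SimpleGraph V, totalWeight T (fun _ => (1 : ℝ))
        = (T.edgeFinset.card : ℝ) := by
      intro T
      rw [totalWeight]
      rw [Finset.sum_boole]
      congr 1
      congr 1
      ext e
      simp [SimpleGraph.mem_edgeFinset]
    have htree : ∀ T : SimpleGraph V, IsSpanningTree G T →
        T.edgeFinset.card + 1 = Fintype.card V := fun T hT => hT.2.card_edgeFinset
    have hm1 : ∀ T : SimpleGraph V, IsSpanningTree G T →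
        totalWeight T (fun _ => (1:ℝ)) ≤ totalWeight Tstar (fun _ => (1:ℝ)) := by
      intro T hT
      rw [tw1, tw1]
      have h1 := htree T hT
      have h2 := htree Tstar hTs
      have : T.edgeFinset.card = Tstar.edgeFinset.card := by omega
      rw [this]
    have h := key (fun _ => (1:ℝ)) (fun e _ => one_pos) hm1
    have hGw : totalWeight G (fun _ => (1:ℝ)) = (G.edgeSet.ncard : ℝ) := by
      rw [tw1]
      congr 1
      rw [Set.ncard_eq_toFinset_card']
      congr 1
    have hTw : totalWeight Tstar (fun _ => (1:ℝ)) = (Fintype.card V : ℝ) - 1 := by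
      rw [tw1]
      have h2 : ((Tstar.edgeFinset.card : ℝ) + 1) = (Fintype.card V : ℝ) := by
        exact_mod_cast congrArg (Nat.cast : ℕ → ℝ) (htree Tstar hTs)
      linarith
    rw [hGw, hTw] at h
    linarith
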